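/- For every n ∈ ℕ and every ε > 0 there exists δ̂ > 0 with the following property. Let (m_ℓ)_{ℓ∈ℕ} be reals with 0 < m_ℓ ≤ 1, let (p_ℓ)_{ℓ∈ℕ} ⊂ ℝ³ satisfy |p_i − p_j| ≥ 5 for i ≠ j, and suppose that for some index k one has Σ_{ℓ≠k} m_ℓ/|p_k − p_ℓ| ≤ δ̂. Define u(x) = 1 + Σ_ℓ m_ℓ/(2|x − p_ℓ|) and u_k(x) = 1 + m_k/(2|x − p_k|). Then for every x with 1 ≤ |x − p_k| ≤ 2 and every j ≤ n, the j-th iterated Fréchet derivative at x of the function u⁴ − u_k⁴ has norm strictly less than ε. -/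

import Mathlib

set_option maxHeartbeats 1000000

open scoped BigOperators

noncomputable section BLAux

namespace BLAux

abbrev E3 : Type := EuclideanSpace ℝ (Fin 3)

def psi (t : ℝ) : ℝ :=
  (Real.smoothTransition (32 * t - 1) * Real.smoothTransition ((8 - t) / 4)) * (Real.sqrt t)⁻¹

lemma psi_eq {t : ℝ} (h1 : 1 / 16 ≤ t) (h2 : t ≤ 4) : psi t = (Real.sqrt t)⁻¹ := by
  unfold psi
  rw [Real.smoothTransition.one_of_one_le (by linarith),
    Real.smoothTransition.one_of_one_le (by linarith), one_mul, one_mul]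

lemma psi_zero_of_le {t : ℝ} (h : t ≤ 1 / 32) : psi t = 0 := by
  unfold psi
  rw [Real.smoothTransition.zero_of_nonpos (by linarith), zero_mul, zero_mul]

lemma psi_zero_of_ge {t : ℝ} (h : 8 ≤ t) : psi t = 0 := by
  unfold psi
  rw [Real.smoothTransition.zero_of_nonpos (x := (8 - t) / 4) (by linarith), mul_zero, zero_mul]

lemma contDiff_psi {N : ℕ∞} : ContDiff ℝ N psi := by
  rw [contDiff_iff_contDiffAt]
  intro t
  rcases lt_or_ge t (1 / 32) with ht | ht
  · have hev : psi =ᶠ[nhds t] fun _ => (0 : ℝ) := by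
      filter_upwards [Iio_mem_nhds ht] with s hs
      exact psi_zero_of_le (le_of_lt hs)
    exact (contDiffAt_const (c := (0:ℝ))).congr_of_eventuallyEq hev
  · have ht0 : (0 : ℝ) < t := by linarith
    have h1 : ContDiffAt ℝ N (fun s => Real.smoothTransition (32 * s - 1)) t :=
      (Real.smoothTransition.contDiff.comp
        ((contDiff_const.mul contDiff_id).sub contDiff_const)).contDiffAt
    have h2 : ContDiffAt ℝ N (fun s => Real.smoothTransition ((8 - s) / 4)) t :=
      (Real.smoothTransition.contDiff.comp
        ((contDiff_const.sub contDiff_id).div_const 4)).contDiffAt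
    have h3 : ContDiffAt ℝ N (fun s => (Real.sqrt s)⁻¹) t :=
      (Real.contDiffAt_sqrt ht0.ne').inv (Real.sqrt_ne_zero'.mpr ht0)
    exact (h1.mul h2).mul h3

def Fbl (z : E3) : ℝ := psi (‖z‖ ^ 2)

lemma contDiff_Fbl {N : ℕ∞} : ContDiff ℝ N Fbl :=
  contDiff_psi.comp (contDiff_norm_sq ℝ)

lemma Fbl_eq {z : E3} (h1 : 1 / 4 ≤ ‖z‖) (h2 : ‖z‖ ≤ 2) : Fbl z = ‖z‖⁻¹ := by
  have h0 : (0 : ℝ) ≤ ‖z‖ := norm_nonneg z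
  have h : psi (‖z‖ ^ 2) = (Real.sqrt (‖z‖ ^ 2))⁻¹ := psi_eq (by nlinarith) (by nlinarith)
  rw [Fbl, h, Real.sqrt_sq h0]

lemma Fbl_compact_support : HasCompactSupport Fbl := by
  apply HasCompactSupport.intro (isCompact_closedBall (0 : E3) 3)
  intro z hz
  have h3 : (3 : ℝ) < ‖z‖ := by
    by_contra h
    exact hz (by simpa [Metric.mem_closedBall, dist_zero_right] using not_lt.mp h)
  exact psi_zero_of_ge (by nlinarith)

lemma Fbl_bound (n : ℕ) :
    ∃ C : ℝ, 0 < C ∧ ∀ i ≤ n, ∀ z : E3, ‖iteratedFDeriv ℝ i Fbl z‖ ≤ C := by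
  have key : ∀ i : ℕ, ∃ C : ℝ, ∀ z : E3, ‖iteratedFDeriv ℝ i Fbl z‖ ≤ C := by
    intro i
    exact (ContDiff.continuous_iteratedFDeriv (le_refl _)
        (contDiff_Fbl (N := (i : ℕ∞)))).bounded_above_of_compact_support
      (Fbl_compact_support.iteratedFDeriv i)
  choose Ci hCi using key
  refine ⟨max 1 ((Finset.range (n + 1)).sup' ⟨0, by simp⟩ Ci),
    lt_of_lt_of_le one_pos (le_max_left _ _), ?_⟩
  intro i hi z
  refine le_trans (hCi i z) (le_trans ?_ (le_max_right _ _))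
  exact Finset.le_sup' Ci (Finset.mem_range.mpr (Nat.lt_succ_of_le hi))


lemma iteratedFDeriv_shift {f : E3 → ℝ} {N : ℕ∞} (hf : ContDiff ℝ N f) (a : E3) :
    ∀ {i : ℕ}, (i : ℕ∞) ≤ N →
      ∀ x : E3, iteratedFDeriv ℝ i (fun y => f (y + a)) x = iteratedFDeriv ℝ i f (x + a) := by
  intro i
  induction i with
  | zero =>
    intro _ x
    ext m
    simp [iteratedFDeriv_zero_apply]
  | succ i IH =>
    intro hi x
    have hi' : (i : ℕ∞) ≤ N := le_trans (by exact_mod_cast Nat.le_succ i) hi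
    have hfun : (iteratedFDeriv ℝ i fun y => f (y + a))
        = fun y => iteratedFDeriv ℝ i f (y + a) := funext fun y => IH hi' y
    have hilt : (i : WithTop ℕ∞) < (N : WithTop ℕ∞) := by
      exact_mod_cast lt_of_lt_of_le
        (show (i : ℕ∞) < ((i + 1 : ℕ) : ℕ∞) by exact_mod_cast Nat.lt_succ_self i) hi
    have hdiff : DifferentiableAt ℝ (iteratedFDeriv ℝ i f) (x + a) :=
      (hf.differentiable_iteratedFDeriv hilt) (x + a)
    have hcomp : fderiv ℝ (fun y => iteratedFDeriv ℝ i f (y + a)) x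
        = fderiv ℝ (iteratedFDeriv ℝ i f) (x + a) := by
      have h1 : fderiv ℝ ((iteratedFDeriv ℝ i f) ∘ fun y => y + a) x
          = (fderiv ℝ (iteratedFDeriv ℝ i f) (x + a)).comp (fderiv ℝ (fun y : E3 => y + a) x) :=
        fderiv_comp (x := x) hdiff (differentiableAt_id.add_const a)
      have h2 : fderiv ℝ (fun y : E3 => y + a) x = ContinuousLinearMap.id ℝ E3 := by
        rw [fderiv_add_const]
        exact fderiv_id'
      rw [show (fun y => iteratedFDeriv ℝ i f (y + a))
            = (iteratedFDeriv ℝ i f) ∘ fun y => y + a from rfl, h1, h2,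
        ContinuousLinearMap.comp_id]
    rw [iteratedFDeriv_succ_eq_comp_left, iteratedFDeriv_succ_eq_comp_left]
    simp only [Function.comp_apply, hfun]
    rw [hcomp]

lemma norm_iteratedFDeriv_scaled {c : ℝ} (hc0 : 0 < c) (hc1 : c ≤ 1) (p : E3) {i : ℕ} {C : ℝ}
    (hC : ∀ z : E3, ‖iteratedFDeriv ℝ i Fbl z‖ ≤ C) (x : E3) :
    ‖iteratedFDeriv ℝ i (fun y => Fbl (c • (y - p))) x‖ ≤ C := by
  have hC0 : 0 ≤ C := le_trans (norm_nonneg _) (hC 0)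
  set L : E3 →L[ℝ] E3 := c • ContinuousLinearMap.id ℝ E3 with hL
  have hLnorm : ‖L‖ ≤ c := by
    rw [hL]
    refine le_trans (ContinuousLinearMap.opNorm_smul_le c _) ?_
    calc ‖c‖ * ‖ContinuousLinearMap.id ℝ E3‖ ≤ ‖c‖ * 1 :=
          mul_le_mul_of_nonneg_left ContinuousLinearMap.norm_id_le (norm_nonneg c)
      _ = c := by rw [mul_one, Real.norm_eq_abs, abs_of_pos hc0]
  have hfe : (fun y => Fbl (c • (y - p))) = (fun z => Fbl (z + -(c • p))) ∘ L := by
    funext y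
    simp only [Function.comp_apply, hL, ContinuousLinearMap.smul_apply,
      ContinuousLinearMap.id_apply, smul_sub]
    rw [sub_eq_add_neg]
  have hcf : ContDiff ℝ (i : ℕ∞) fun z : E3 => Fbl (z + -(c • p)) :=
    contDiff_Fbl.comp (contDiff_id.add contDiff_const)
  rw [hfe, ContinuousLinearMap.iteratedFDeriv_comp_right L hcf x (le_refl _)]
  refine le_trans (ContinuousMultilinearMap.norm_compContinuousLinearMap_le _ _) ?_
  rw [iteratedFDeriv_shift (contDiff_Fbl (N := (i : ℕ∞))) (-(c • p)) (le_refl _) (L x)]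
  calc ‖iteratedFDeriv ℝ i Fbl (L x + -(c • p))‖ * ∏ _j : Fin i, ‖L‖
      ≤ C * ∏ _j : Fin i, (1 : ℝ) := by
        refine mul_le_mul (hC _) ?_ (Finset.prod_nonneg fun _ _ => norm_nonneg _) hC0
        exact Finset.prod_le_prod (fun _ _ => norm_nonneg _)
          (fun _ _ => le_trans hLnorm hc1)
    _ = C := by simp

lemma iteratedFDeriv_sub_apply' {i : ℕ} {f g : E3 → ℝ} {x : E3}
    (hf : ContDiff ℝ (i : ℕ) f) (hg : ContDiff ℝ (i : ℕ) g) :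
    iteratedFDeriv ℝ i (fun y => f y - g y) x
      = iteratedFDeriv ℝ i f x - iteratedFDeriv ℝ i g x := by
  simp only [sub_eq_add_neg]
  rw [iteratedFDeriv_add_apply' hf.contDiffAt hg.neg.contDiffAt]
  congr 1
  exact iteratedFDeriv_neg_apply (f := g)

lemma mul_bound {f g : E3 → ℝ} {n : ℕ} (hf : ContDiff ℝ (n : ℕ∞) f)
    (hg : ContDiff ℝ (n : ℕ∞) g) {x : E3} {A B : ℝ} (hB : 0 ≤ B)
    (hfA : ∀ i ≤ n, ‖iteratedFDeriv ℝ i f x‖ ≤ A)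
    (hgB : ∀ i ≤ n, ‖iteratedFDeriv ℝ i g x‖ ≤ B) :
    ∀ i ≤ n, ‖iteratedFDeriv ℝ i (fun y => f y * g y) x‖ ≤ 2 ^ n * A * B := by
  intro i hi
  have h0A : 0 ≤ A := le_trans (norm_nonneg _) (hfA 0 (Nat.zero_le n))
  calc ‖iteratedFDeriv ℝ i (fun y => f y * g y) x‖
      ≤ ∑ q ∈ Finset.range (i + 1),
          (i.choose q : ℝ) * ‖iteratedFDeriv ℝ q f x‖ * ‖iteratedFDeriv ℝ (i - q) g x‖ := by
        exact norm_iteratedFDeriv_mul_le (by exact_mod_cast hf) (by exact_mod_cast hg) x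
          (by exact_mod_cast hi)
    _ ≤ ∑ q ∈ Finset.range (i + 1), (i.choose q : ℝ) * A * B := by
        refine Finset.sum_le_sum fun q hq => ?_
        have hq' : q ≤ n := le_trans (Nat.lt_succ_iff.mp (Finset.mem_range.mp hq)) hi
        refine mul_le_mul (mul_le_mul_of_nonneg_left (hfA q hq') (by positivity))
          (hgB (i - q) (le_trans (Nat.sub_le i q) hi)) (norm_nonneg _) (by positivity)
    _ = (2 : ℝ) ^ i * A * B := by
        rw [← Finset.sum_mul, ← Finset.sum_mul]
        congr 2
        exact_mod_cast congrArg (Nat.cast : ℕ → ℝ) (Nat.sum_range_choose i)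
    _ ≤ 2 ^ n * A * B := by
        refine mul_le_mul_of_nonneg_right (mul_le_mul_of_nonneg_right ?_ h0A) hB
        exact pow_le_pow_right₀ one_le_two hi

end BLAux

theorem brill_lindquist_close_to_schwarzschild (n : ℕ) (ε : ℝ) (hε : 0 < ε) :
    ∃ δ > (0 : ℝ), ∀ (m : ℕ → ℝ) (p : ℕ → EuclideanSpace ℝ (Fin 3)) (k : ℕ),
      (∀ ℓ, 0 < m ℓ) → (∀ ℓ, m ℓ ≤ 1) →
      (∀ i j, i ≠ j → (5 : ℝ) ≤ ‖p i - p j‖) →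
      Summable (fun ℓ : {ℓ : ℕ // ℓ ≠ k} => m ℓ.1 / ‖p k - p ℓ.1‖) →
      (∑' ℓ : {ℓ : ℕ // ℓ ≠ k}, m ℓ.1 / ‖p k - p ℓ.1‖) ≤ δ →
      ∀ x : EuclideanSpace ℝ (Fin 3), 1 ≤ ‖x - p k‖ → ‖x - p k‖ ≤ 2 →
      ∀ j ≤ n,
        ‖iteratedFDeriv ℝ j
            (fun y => (1 + ∑' ℓ, m ℓ / (2 * ‖y - p ℓ‖)) ^ 4
              - (1 + m k / (2 * ‖y - p k‖)) ^ 4) x‖ < ε := by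
  classical
  obtain ⟨C, hC0, hC⟩ := BLAux.Fbl_bound n
  set K : ℝ := 1 + C with hKdef
  set Kh : ℝ := 2 ^ n * (2 * K) * (2 ^ n * K * K + 2 ^ n * K * K) with hKhdef
  set M : ℝ := 2 ^ n * (C / 2) * Kh + 1 with hMdef
  have hK0 : 0 < K := by rw [hKdef]; linarith
  have hKh0 : 0 ≤ Kh := by rw [hKhdef]; positivity
  have hM0 : 0 < M := by rw [hMdef]; positivity
  refine ⟨min 1 (ε / M), lt_min one_pos (div_pos hε hM0), ?_⟩
  intro m p k hm0 hm1 hsep hsumm hδ x hx1 hx2 j hj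
  set T : ℝ := ∑' ℓ : {ℓ : ℕ // ℓ ≠ k}, m ℓ.1 / ‖p k - p ℓ.1‖ with hTdef
  have hT0 : 0 ≤ T := tsum_nonneg fun ℓ => div_nonneg (hm0 _).le (norm_nonneg _)
  have hT1 : T ≤ 1 := le_trans hδ (min_le_left _ _)
  set d : ℕ → ℝ := fun ℓ => if ℓ = k then 2 else ‖p k - p ℓ‖ with hd
  have hd5 : ∀ ℓ, ℓ ≠ k → 5 ≤ d ℓ := by
    intro ℓ h; simp only [hd, if_neg h]; exact hsep k ℓ (Ne.symm h)
  have hd2 : ∀ ℓ, 2 ≤ d ℓ := by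
    intro ℓ; by_cases h : ℓ = k
    · simp [hd, h]
    · linarith [hd5 ℓ h]
  have hd0 : ∀ ℓ, 0 < d ℓ := fun ℓ => lt_of_lt_of_le two_pos (hd2 ℓ)
  set g : ℕ → BLAux.E3 → ℝ :=
    fun ℓ y => (m ℓ / (2 * d ℓ)) • BLAux.Fbl ((d ℓ)⁻¹ • (y - p ℓ)) with hg
  have hgc : ∀ (N : ℕ∞) (ℓ : ℕ), ContDiff ℝ N (g ℓ) := fun N ℓ =>
    (BLAux.contDiff_Fbl.comp ((contDiff_id.sub contDiff_const).const_smul _)).const_smul _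
  set W : ℕ → ℝ := fun ℓ => m ℓ / (2 * d ℓ) with hW
  have hWnn : ∀ ℓ, 0 ≤ W ℓ := fun ℓ => div_nonneg (hm0 ℓ).le (by linarith [hd0 ℓ])
  have hdk : d k = 2 := by simp [hd]
  have hWk : W k ≤ 1 / 4 := by
    have h1 := hm1 k
    simp only [hW, hdk]
    rw [div_le_iff₀ (by norm_num : (0:ℝ) < 2 * 2)]
    linarith
  have hkey : ∀ (ℓ : ℕ) (i : ℕ), i ≤ n → ∀ x' : BLAux.E3,
      ‖iteratedFDeriv ℝ i (g ℓ) x'‖ ≤ W ℓ * C := by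
    intro ℓ i hi x'
    have hinner : ContDiff ℝ (i : ℕ∞) fun y : BLAux.E3 => BLAux.Fbl ((d ℓ)⁻¹ • (y - p ℓ)) :=
      BLAux.contDiff_Fbl.comp ((contDiff_id.sub contDiff_const).const_smul _)
    have hiv : (d ℓ)⁻¹ ≤ 1 := by
      rw [inv_le_one₀ (hd0 ℓ)]; linarith [hd2 ℓ]
    calc ‖iteratedFDeriv ℝ i (g ℓ) x'‖
        = W ℓ * ‖iteratedFDeriv ℝ i (fun y => BLAux.Fbl ((d ℓ)⁻¹ • (y - p ℓ))) x'‖ := by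
          simp only [hg]
          rw [iteratedFDeriv_const_smul_apply' (by exact_mod_cast hinner.contDiffAt), norm_smul,
            Real.norm_eq_abs, abs_of_nonneg (hWnn ℓ)]
      _ ≤ W ℓ * C := mul_le_mul_of_nonneg_left
          (BLAux.norm_iteratedFDeriv_scaled (inv_pos.mpr (hd0 ℓ)) hiv (p ℓ) (hC i hi) x')
          (hWnn ℓ)
  -- summability
  have hsum2 : Summable fun ℓ : {z : ℕ // z ∉ ({k} : Finset ℕ)} => m ℓ.1 / ‖p k - p ℓ.1‖ := by
    exact ((Equiv.summable_iff
        (Equiv.subtypeEquivRight (q := fun ℓ : ℕ => ℓ ≠ k)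
          (fun ℓ => by simp))).mpr hsumm).congr fun z => by
      simp [Equiv.subtypeEquivRight]; rfl
  have hWsum : Summable W := by
    rw [← Finset.summable_compl_iff ({k} : Finset ℕ)]
    refine Summable.of_nonneg_of_le (fun ℓ => hWnn ℓ.1) ?_ hsum2
    intro ℓ
    have hne : ℓ.1 ≠ k := by simpa using ℓ.2
    have h5 : 5 ≤ ‖p k - p ℓ.1‖ := hsep k ℓ.1 (Ne.symm hne)
    simp only [Function.comp_apply, hW, hd, if_neg hne]
    exact div_le_div_of_nonneg_left (hm0 ℓ.1).le (by linarith) (by linarith)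
  have hwsum : Summable fun ℓ => W ℓ * C := hWsum.mul_right C
  have hT' : ∑' ℓ : ℕ, (if ℓ = k then 0 else W ℓ) = T / 2 := by
    have e1 : ∀ ℓ : ℕ, (if ℓ = k then (0:ℝ) else W ℓ)
        = Set.indicator {ℓ : ℕ | ℓ ≠ k} W ℓ := by
      intro ℓ; by_cases h : ℓ = k <;> simp [Set.indicator_apply, h]
    rw [tsum_congr e1, ← tsum_subtype]
    have e2 : ∀ ℓ : {ℓ : ℕ // ℓ ≠ k}, W ℓ.1 = (m ℓ.1 / ‖p k - p ℓ.1‖) / 2 := by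
      intro ℓ
      simp only [hW, hd, if_neg ℓ.2]
      rw [div_div, mul_comm]
    have e3 : ∑' (z : ↑{ℓ : ℕ | ℓ ≠ k}), W ↑z
        = ∑' (z : ↑{ℓ : ℕ | ℓ ≠ k}), (m ↑z / ‖p k - p ↑z‖) / 2 :=
      tsum_congr fun z => e2 ⟨z.1, z.2⟩
    rw [e3, tsum_div_const, hTdef]
    rfl
  have hWtot : ∑' ℓ, W ℓ ≤ 1 := by
    rw [hWsum.tsum_eq_add_tsum_ite k, hT']
    linarith
  -- the series S
  set S : BLAux.E3 → ℝ := fun y => ∑' ℓ, g ℓ y with hS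
  have hvb : ∀ i : ℕ, (i : ℕ∞) ≤ (n : ℕ∞) → Summable (fun ℓ => W ℓ * C) := fun _ _ => hwsum
  have hkey' : ∀ (i : ℕ) (ℓ : ℕ) (x' : BLAux.E3), (i : ℕ∞) ≤ (n : ℕ∞) →
      ‖iteratedFDeriv ℝ i (g ℓ) x'‖ ≤ W ℓ * C :=
    fun i ℓ x' hi => hkey ℓ i (by exact_mod_cast hi) x'
  have hScd : ContDiff ℝ (n : ℕ∞) S := contDiff_tsum (hgc _) hvb hkey'
  have hDS : ∀ i ≤ n, ∀ x' : BLAux.E3,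
      iteratedFDeriv ℝ i S x' = ∑' ℓ, iteratedFDeriv ℝ i (g ℓ) x' :=
    fun i hi x' => iteratedFDeriv_tsum_apply (hgc _) hvb hkey' (by exact_mod_cast hi) x'
  have hDSnorm : ∀ i ≤ n, ∀ x' : BLAux.E3, ‖iteratedFDeriv ℝ i S x'‖ ≤ C := by
    intro i hi x'
    rw [hDS i hi x']
    have hnorms : Summable fun ℓ => ‖iteratedFDeriv ℝ i (g ℓ) x'‖ :=
      Summable.of_nonneg_of_le (fun _ => norm_nonneg _) (fun ℓ => hkey ℓ i hi x') hwsum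
    calc ‖∑' ℓ, iteratedFDeriv ℝ i (g ℓ) x'‖ ≤ ∑' ℓ, ‖iteratedFDeriv ℝ i (g ℓ) x'‖ :=
          norm_tsum_le_tsum_norm hnorms
      _ ≤ ∑' ℓ, W ℓ * C := Summable.tsum_le_tsum (fun ℓ => hkey ℓ i hi x') hnorms hwsum
      _ = (∑' ℓ, W ℓ) * C := tsum_mul_right
      _ ≤ 1 * C := mul_le_mul_of_nonneg_right hWtot hC0.le
      _ = C := one_mul C
  -- the tail v
  set v : BLAux.E3 → ℝ := fun y => S y - g k y with hv
  have hvcd : ContDiff ℝ (n : ℕ∞) v := hScd.sub (hgc _ k)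
  have hvbnd : ∀ i ≤ n, ‖iteratedFDeriv ℝ i v x‖ ≤ C / 2 * T := by
    intro i hi
    have hsummand : Summable fun ℓ => iteratedFDeriv ℝ i (g ℓ) x :=
      Summable.of_norm_bounded hwsum fun ℓ => hkey ℓ i hi x
    have hstep : iteratedFDeriv ℝ i v x
        = ∑' ℓ : ℕ, (if ℓ = k then 0 else iteratedFDeriv ℝ i (g ℓ) x) := by
      rw [hv]
      rw [BLAux.iteratedFDeriv_sub_apply' (hScd.of_le (by exact_mod_cast hi))
        ((hgc (n : ℕ∞) k).of_le (by exact_mod_cast hi)), hDS i hi x,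
        hsummand.tsum_eq_add_tsum_ite k, add_sub_cancel_left]
    rw [hstep]
    have hnorms2 : Summable fun ℓ : ℕ => (if ℓ = k then (0:ℝ) else W ℓ * C) := by
      refine Summable.of_nonneg_of_le (fun ℓ => ?_) (fun ℓ => ?_) hwsum
      · by_cases h : ℓ = k <;> simp [h, mul_nonneg (hWnn ℓ) hC0.le]
      · by_cases h : ℓ = k <;> simp [h, mul_nonneg (hWnn k) hC0.le]
    have hb : ∀ ℓ : ℕ, ‖(if ℓ = k then 0 else iteratedFDeriv ℝ i (g ℓ) x)‖
        ≤ (if ℓ = k then (0:ℝ) else W ℓ * C) := by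
      intro ℓ
      by_cases h : ℓ = k
      · simp [h]
      · simpa [h] using hkey ℓ i hi x
    calc ‖∑' ℓ : ℕ, (if ℓ = k then 0 else iteratedFDeriv ℝ i (g ℓ) x)‖
        ≤ ∑' ℓ : ℕ, (if ℓ = k then (0:ℝ) else W ℓ * C) :=
          tsum_of_norm_bounded hnorms2.hasSum hb
      _ = (∑' ℓ : ℕ, (if ℓ = k then (0:ℝ) else W ℓ)) * C := by
          rw [← tsum_mul_right]
          refine tsum_congr fun ℓ => ?_
          by_cases h : ℓ = k <;> simp [h]
      _ = C / 2 * T := by rw [hT']; ring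
  -- bounds for 1 + g k and 1 + S
  have hWkC : W k * C ≤ C := by
    have := mul_le_mul_of_nonneg_right hWk hC0.le
    linarith
  set bfun : BLAux.E3 → ℝ := fun y => 1 + g k y with hbdef
  set afun : BLAux.E3 → ℝ := fun y => 1 + S y with hadef
  have habc : ContDiff ℝ (n : ℕ∞) afun := contDiff_const.add hScd
  have hbbc : ContDiff ℝ (n : ℕ∞) bfun := contDiff_const.add (hgc _ k)
  have habnd : ∀ i ≤ n, ‖iteratedFDeriv ℝ i afun x‖ ≤ K := by
    intro i hi
    cases i with
    | zero =>
      rw [norm_iteratedFDeriv_zero]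
      have h0 := hDSnorm 0 (Nat.zero_le n) x
      rw [norm_iteratedFDeriv_zero] at h0
      calc ‖afun x‖ ≤ ‖(1:ℝ)‖ + ‖S x‖ := norm_add_le 1 (S x)
        _ ≤ 1 + C := by rw [norm_one]; linarith
        _ = K := hKdef.symm
    | succ i' =>
      rw [hadef, iteratedFDeriv_add_apply' (i := i' + 1) contDiffAt_const
        (hScd.of_le (by exact_mod_cast hi)).contDiffAt]
      rw [iteratedFDeriv_const_of_ne (Nat.succ_ne_zero i')]
      simp only [Pi.zero_apply, zero_add]
      calc ‖iteratedFDeriv ℝ (i' + 1) S x‖ ≤ C := hDSnorm _ hi x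
        _ ≤ K := by rw [hKdef]; linarith
  have hbbnd : ∀ i ≤ n, ‖iteratedFDeriv ℝ i bfun x‖ ≤ K := by
    intro i hi
    cases i with
    | zero =>
      rw [norm_iteratedFDeriv_zero]
      have h0 := le_trans (hkey k 0 (Nat.zero_le n) x) hWkC
      rw [norm_iteratedFDeriv_zero] at h0
      calc ‖bfun x‖ ≤ ‖(1:ℝ)‖ + ‖g k x‖ := norm_add_le 1 (g k x)
        _ ≤ 1 + C := by rw [norm_one]; linarith
        _ = K := hKdef.symm
    | succ i' =>
      rw [hbdef, iteratedFDeriv_add_apply' (i := i' + 1) contDiffAt_const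
        ((hgc (n : ℕ∞) k).of_le (by exact_mod_cast hi)).contDiffAt]
      rw [iteratedFDeriv_const_of_ne (Nat.succ_ne_zero i')]
      simp only [Pi.zero_apply, zero_add]
      calc ‖iteratedFDeriv ℝ (i' + 1) (g k) x‖ ≤ C := le_trans (hkey k _ hi x) hWkC
        _ ≤ K := by rw [hKdef]; linarith
  -- products
  have hsum_ab : ∀ i ≤ n, ‖iteratedFDeriv ℝ i (fun y => afun y + bfun y) x‖ ≤ 2 * K := by
    intro i hi
    rw [iteratedFDeriv_add_apply' (i := i) (habc.of_le (by exact_mod_cast hi)).contDiffAt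
      (hbbc.of_le (by exact_mod_cast hi)).contDiffAt]
    have := norm_add_le (iteratedFDeriv ℝ i afun x) (iteratedFDeriv ℝ i bfun x)
    have h1 := habnd i hi
    have h2 := hbbnd i hi
    linarith
  have ha2 : ∀ i ≤ n, ‖iteratedFDeriv ℝ i (fun y => afun y * afun y) x‖ ≤ 2 ^ n * K * K :=
    BLAux.mul_bound habc habc hK0.le habnd habnd
  have hb2 : ∀ i ≤ n, ‖iteratedFDeriv ℝ i (fun y => bfun y * bfun y) x‖ ≤ 2 ^ n * K * K :=
    BLAux.mul_bound hbbc hbbc hK0.le hbbnd hbbnd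
  have hs2 : ∀ i ≤ n, ‖iteratedFDeriv ℝ i
      (fun y => afun y * afun y + bfun y * bfun y) x‖ ≤ 2 ^ n * K * K + 2 ^ n * K * K := by
    intro i hi
    rw [iteratedFDeriv_add_apply' (i := i) ((habc.mul habc).of_le (by exact_mod_cast hi)).contDiffAt
      ((hbbc.mul hbbc).of_le (by exact_mod_cast hi)).contDiffAt]
    have := norm_add_le (iteratedFDeriv ℝ i (fun y => afun y * afun y) x)
      (iteratedFDeriv ℝ i (fun y => bfun y * bfun y) x)
    have h1 := ha2 i hi
    have h2 := hb2 i hi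
    linarith
  have hh : ∀ i ≤ n, ‖iteratedFDeriv ℝ i
      (fun y => (afun y + bfun y) * (afun y * afun y + bfun y * bfun y)) x‖ ≤ Kh := by
    rw [hKhdef]
    exact BLAux.mul_bound (habc.add hbbc) ((habc.mul habc).add (hbbc.mul hbbc))
      (by positivity) hsum_ab hs2
  have hG : ∀ i ≤ n, ‖iteratedFDeriv ℝ i
      (fun y => v y * ((afun y + bfun y) * (afun y * afun y + bfun y * bfun y))) x‖
      ≤ 2 ^ n * (C / 2 * T) * Kh :=
    BLAux.mul_bound hvcd ((habc.add hbbc).mul ((habc.mul habc).add (hbbc.mul hbbc)))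
      hKh0 hvbnd hh
  -- local identification
  have hterm : ∀ y : BLAux.E3, 1 / 2 < ‖y - p k‖ → ‖y - p k‖ < 5 / 2 →
      ∀ ℓ, m ℓ / (2 * ‖y - p ℓ‖) = g ℓ y := by
    intro y hy1 hy2 ℓ
    have hnormsmul : ‖(d ℓ)⁻¹ • (y - p ℓ)‖ = (d ℓ)⁻¹ * ‖y - p ℓ‖ := by
      rw [norm_smul, Real.norm_eq_abs, abs_of_pos (inv_pos.mpr (hd0 ℓ))]
    by_cases h : ℓ = k
    · subst h
      have hdl : d ℓ = 2 := by simp [hd]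
      have hF : BLAux.Fbl ((d ℓ)⁻¹ • (y - p ℓ)) = ‖(d ℓ)⁻¹ • (y - p ℓ)‖⁻¹ := by
        apply BLAux.Fbl_eq <;> rw [hnormsmul, hdl] <;>
          [skip; skip] <;> nlinarith
      simp only [hg]
      rw [hF, hnormsmul, hdl]
      have hny : ‖y - p ℓ‖ ≠ 0 := by positivity
      rw [smul_eq_mul, mul_inv, inv_inv]
      field_simp
    · have hdl : d ℓ = ‖p k - p ℓ‖ := by simp [hd, h]
      have hD5 : 5 ≤ d ℓ := hd5 ℓ h
      have hub : ‖y - p ℓ‖ ≤ 5 / 2 + d ℓ := by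
        have h1 : ‖y - p ℓ‖ ≤ ‖y - p k‖ + ‖p k - p ℓ‖ := by
          calc ‖y - p ℓ‖ = ‖(y - p k) + (p k - p ℓ)‖ := by rw [sub_add_sub_cancel]
            _ ≤ ‖y - p k‖ + ‖p k - p ℓ‖ := norm_add_le _ _
        rw [hdl]; linarith
      have hlb : d ℓ - 5 / 2 ≤ ‖y - p ℓ‖ := by
        have h1 : ‖p k - p ℓ‖ ≤ ‖p k - y‖ + ‖y - p ℓ‖ := by
          calc ‖p k - p ℓ‖ = ‖(p k - y) + (y - p ℓ)‖ := by rw [sub_add_sub_cancel]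
            _ ≤ ‖p k - y‖ + ‖y - p ℓ‖ := norm_add_le _ _
        rw [norm_sub_rev (p k) y] at h1
        rw [hdl]; linarith
      have hny : (0:ℝ) < ‖y - p ℓ‖ := by linarith
      have hF : BLAux.Fbl ((d ℓ)⁻¹ • (y - p ℓ)) = ‖(d ℓ)⁻¹ • (y - p ℓ)‖⁻¹ := by
        apply BLAux.Fbl_eq <;> rw [hnormsmul]
        · rw [le_inv_mul_iff₀ (hd0 ℓ)]  -- 1/4 ≤ d⁻¹ * t ↔ d * (1/4) ≤ t
          linarith
        · rw [inv_mul_le_iff₀ (hd0 ℓ)]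
          linarith
      simp only [hg]
      rw [hF, hnormsmul]
      have hdne : d ℓ ≠ 0 := (hd0 ℓ).ne'
      rw [smul_eq_mul, mul_inv, inv_inv]
      field_simp
  have heq : (fun y : BLAux.E3 => (1 + ∑' ℓ, m ℓ / (2 * ‖y - p ℓ‖)) ^ 4
        - (1 + m k / (2 * ‖y - p k‖)) ^ 4)
      =ᶠ[nhds x] (fun y => v y *
        ((afun y + bfun y) * (afun y * afun y + bfun y * bfun y))) := by
    have hopen : IsOpen {y : BLAux.E3 | 1 / 2 < ‖y - p k‖ ∧ ‖y - p k‖ < 5 / 2} := by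
      have h1 : Continuous fun y : BLAux.E3 => ‖y - p k‖ :=
        (continuous_id.sub continuous_const).norm
      exact (isOpen_lt continuous_const h1).inter (isOpen_lt h1 continuous_const)
    have hmem : {y : BLAux.E3 | 1 / 2 < ‖y - p k‖ ∧ ‖y - p k‖ < 5 / 2} ∈ nhds x :=
      hopen.mem_nhds ⟨by linarith, by linarith⟩
    filter_upwards [hmem] with y hy
    have hSy : (∑' ℓ, m ℓ / (2 * ‖y - p ℓ‖)) = S y :=
      tsum_congr fun ℓ => hterm y hy.1 hy.2 ℓ
    have hgky : m k / (2 * ‖y - p k‖) = g k y := hterm y hy.1 hy.2 k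
    rw [hSy, hgky]
    show (1 + S y) ^ 4 - (1 + g k y) ^ 4 = _
    simp only [hv, hadef, hbdef]
    ring
  have hiteq : iteratedFDeriv ℝ j
      (fun y : BLAux.E3 => (1 + ∑' ℓ, m ℓ / (2 * ‖y - p ℓ‖)) ^ 4
        - (1 + m k / (2 * ‖y - p k‖)) ^ 4) x
      = iteratedFDeriv ℝ j (fun y => v y *
        ((afun y + bfun y) * (afun y * afun y + bfun y * bfun y))) x := by
    rw [← iteratedFDerivWithin_univ, ← iteratedFDerivWithin_univ]
    have h1 : (fun y : BLAux.E3 => (1 + ∑' ℓ, m ℓ / (2 * ‖y - p ℓ‖)) ^ 4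
          - (1 + m k / (2 * ‖y - p k‖)) ^ 4)
        =ᶠ[nhdsWithin x Set.univ] (fun y => v y *
          ((afun y + bfun y) * (afun y * afun y + bfun y * bfun y))) := by
      rw [nhdsWithin_univ]; exact heq
    exact h1.iteratedFDerivWithin_eq heq.eq_of_nhds j
  rw [hiteq]
  have hfinal := hG j hj
  have hTle : T ≤ ε / M := le_trans hδ (min_le_right _ _)
  have hM1 : 0 ≤ M - 1 := by
    have : (0:ℝ) ≤ 2 ^ n * (C / 2) * Kh := by positivity
    rw [hMdef]; linarith
  calc ‖iteratedFDeriv ℝ j (fun y => v y *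
        ((afun y + bfun y) * (afun y * afun y + bfun y * bfun y))) x‖
      ≤ 2 ^ n * (C / 2 * T) * Kh := hfinal
    _ = T * (M - 1) := by rw [hMdef]; ring
    _ ≤ ε / M * (M - 1) := mul_le_mul_of_nonneg_right hTle hM1
    _ < ε / M * M := by
        have := div_pos hε hM0
        nlinarith
    _ = ε := div_mul_cancel₀ ε hM0.ne'
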